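/- (Refined forward Lipschitz estimate depending on the number of shocks, proved inside Lemma B.5.) Let the model data satisfy the Lipschitz assumptions, let v, v̄ ∈ V, and let μ, μ̄ be the unique solutions of (E2), (E4) and (E5) given v and v̄ respectively. Then for every (t,u) ∈ TS, ‖μ(t,u) − μ̄(t,u)‖ ≤ L_Q̂ · T · ( Σ_{i=0}^{Z(u)} ( exp((Qmax + L_Q̂)·T) )^{i+1} · Jmax^i ) · sup_{(s,w)∈TS} ‖v(s,w) − v̄(s,w)‖. -/

import Mathlib

open MeasureTheory
open scoped BigOperators Classical

namespace MFGShocks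

/-- The probability simplex `𝒫(𝕊)` in `ℝ^S`. -/
def simplex (S : ℕ) : Set (Fin S → ℝ) :=
  {m | (∀ i, 0 ≤ m i) ∧ ∑ i, m i = 1}

/-- Membership in the parameter set `𝕌`: for some `k ≤ n`, the first `k` coordinates are
increasing and lie in `[0,T]` and the remaining coordinates equal `-1`. -/
def memU (n : ℕ) (T : ℝ) (u : Fin n → ℝ) : Prop :=
  ∃ k ≤ n, (∀ i : Fin n, (i : ℕ) < k → u i ∈ Set.Icc (0 : ℝ) T) ∧
    (∀ i j : Fin n, (j : ℕ) < k → i ≤ j → u i ≤ u j) ∧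
    (∀ i : Fin n, k ≤ (i : ℕ) → u i = -1)

/-- `Z(u)`: the number of coordinates of `u` different from `-1`, i.e.\ the number of
shocks recorded in `u`. -/
noncomputable def Zu {n : ℕ} (u : Fin n → ℝ) : ℕ :=
  (Finset.univ.filter fun i => u i ≠ -1).card

/-- Membership `(t,u) ∈ TS`. -/
def memTS (n : ℕ) (T : ℝ) (t : ℝ) (u : Fin n → ℝ) : Prop :=
  memU n T u ∧ t ∈ Set.Icc (0 : ℝ) T ∧ ∀ i, u i ≤ t

/-- `→(u,t)`: record a new shock at time `t` (replace coordinate `Z(u)+1` of `u` by `t`). -/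
noncomputable def push {n : ℕ} (u : Fin n → ℝ) (t : ℝ) : Fin n → ℝ :=
  fun i => if (i : ℕ) = Zu u then t else u i

/-- `←u`: delete the last shock (replace coordinate `Z(u)` of `u` by `-1`). -/
noncomputable def pop {n : ℕ} (u : Fin n → ℝ) : Fin n → ℝ :=
  fun i => if (i : ℕ) + 1 = Zu u then -1 else u i

/-- `t_u = u^{Z(u)}`: the time of the last shock recorded in `u` (`0` if there is none). -/
noncomputable def lastTime {n : ℕ} (u : Fin n → ℝ) : ℝ :=
  if h : Zu u - 1 < n then u ⟨Zu u - 1, h⟩ else 0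

/-- The left endpoint of the time interval associated with the parameter `u`:
`t_u` if `u` records at least one shock, and `0` otherwise. -/
noncomputable def startTime {n : ℕ} (u : Fin n → ℝ) : ℝ :=
  if Zu u = 0 then 0 else lastTime u

/-- `f` is absolutely continuous on the interval `[a,b]`. -/
def AbsContOn {E : Type*} [NormedAddCommGroup E] (f : ℝ → E) (a b : ℝ) : Prop :=
  ∀ ε > (0 : ℝ), ∃ δ > (0 : ℝ), ∀ (N : ℕ) (c d : Fin N → ℝ),
    (∀ k, a ≤ c k ∧ c k ≤ d k ∧ d k ≤ b) →
    (∀ k l, k ≠ l → Set.Ioo (c k) (d k) ∩ Set.Ioo (c l) (d l) = ∅) →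
    ∑ k, (d k - c k) < δ → ∑ k, ‖f (d k) - f (c k)‖ < ε

/-- A function `f : TS → ℝ^S` is regular if `f(·,u)` is absolutely continuous on
`[max_k u^k, T]` (intersected with `[0,T]`) for every `u ∈ 𝕌`. -/
def Regular (S n : ℕ) (T : ℝ) (f : ℝ → (Fin n → ℝ) → Fin S → ℝ) : Prop :=
  ∀ u : Fin n → ℝ, memU n T u → AbsContOn (fun t => f t u) (startTime u) T

/-- The model data: reduced-form running reward `ψ̂`, reduced-form intensity matrix `Q̂`,
shock intensities `λ`, terminal reward `Ψ`, relocation map `J` (independent of the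
distribution) and initial distribution `m₀`. -/
structure Model (S n : ℕ) where
  psi : ℝ → (Fin n → ℝ) → (Fin S → ℝ) → (Fin S → ℝ) → Fin S → ℝ
  Q : ℝ → (Fin n → ℝ) → (Fin S → ℝ) → (Fin S → ℝ) → Fin S → Fin S → ℝ
  lam : ℕ → ℝ → (Fin S → ℝ) → ℝ
  Psi : ℕ → (Fin S → ℝ) → Fin S → ℝ
  J : ℝ → Fin S → Fin S
  m0 : Fin S → ℝ

/-- The standing (boundedness, measurability, intensity-matrix and Lipschitz) assumptions on
the model data, together with the constants `Ψmax, ψmax, Qmax, λmax, Jmax` bounding the data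
and the Lipschitz constants `L_ψ̂, L_Q̂, L_Ψ, L_λ`.  Throughout, `ℝ^S` carries the maximum
norm and the matrix norm is the compatible induced one (maximal absolute row sum). -/
structure Hyps (S n : ℕ) (T : ℝ) (D : Model S n)
    (Lpsi LQ LPsi Llam Psimax psimax Qmax lammax : ℝ) (Jmax : ℕ) : Prop where
  hS : 1 ≤ S
  hn : 1 ≤ n
  hT : 0 < T
  hm0 : D.m0 ∈ simplex S
  hLpsi : 0 < Lpsi
  hLQ : 0 < LQ
  hLPsi : 0 < LPsi
  hLlam : 0 < Llam
  psi_meas : Measurable fun p : ℝ × (Fin n → ℝ) × (Fin S → ℝ) × (Fin S → ℝ) =>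
    D.psi p.1 p.2.1 p.2.2.1 p.2.2.2
  Q_meas : Measurable fun p : ℝ × (Fin n → ℝ) × (Fin S → ℝ) × (Fin S → ℝ) =>
    D.Q p.1 p.2.1 p.2.2.1 p.2.2.2
  lam_meas : ∀ k, Measurable fun p : ℝ × (Fin S → ℝ) => D.lam k p.1 p.2
  Psi_meas : ∀ k, Measurable (D.Psi k)
  J_meas : Measurable D.J
  psi_bdd : ∀ t u m v, memTS n T t u → m ∈ simplex S → ∀ i, |D.psi t u m v i| ≤ psimax
  Q_bdd : ∀ t u m v, memTS n T t u → m ∈ simplex S → ∀ i, ∑ j, |D.Q t u m v i j| ≤ Qmax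
  Q_offdiag : ∀ t u m v i j, i ≠ j → 0 ≤ D.Q t u m v i j
  Q_rowsum : ∀ t u m v i, ∑ j, D.Q t u m v i j = 0
  lam_pos : ∀ k, 1 ≤ k → k ≤ n → ∀ t ∈ Set.Icc (0 : ℝ) T, ∀ m ∈ simplex S,
    0 < D.lam k t m
  lam_bdd : ∀ k, 1 ≤ k → k ≤ n → ∀ t ∈ Set.Icc (0 : ℝ) T, ∀ m ∈ simplex S,
    D.lam k t m ≤ lammax
  Psi_bdd : ∀ k ≤ n, ∀ m ∈ simplex S, ∀ i, |D.Psi k m i| ≤ Psimax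
  psi_lip : ∀ t u, memTS n T t u → ∀ m₁ ∈ simplex S, ∀ m₂ ∈ simplex S,
    ∀ v₁ v₂ : Fin S → ℝ, ∀ i,
      |D.psi t u m₁ v₁ i - D.psi t u m₂ v₂ i| ≤ Lpsi * (‖m₁ - m₂‖ + ‖v₁ - v₂‖)
  Q_lip : ∀ t u, memTS n T t u → ∀ m₁ ∈ simplex S, ∀ m₂ ∈ simplex S,
    ∀ v₁ v₂ : Fin S → ℝ, ∀ i,
      ∑ j, |D.Q t u m₁ v₁ i j - D.Q t u m₂ v₂ i j| ≤ LQ * (‖m₁ - m₂‖ + ‖v₁ - v₂‖)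
  Psi_lip : ∀ k ≤ n, ∀ m₁ ∈ simplex S, ∀ m₂ ∈ simplex S,
    ‖D.Psi k m₁ - D.Psi k m₂‖ ≤ LPsi * ‖m₁ - m₂‖
  lam_lip : ∀ k, 1 ≤ k → k ≤ n → ∀ t ∈ Set.Icc (0 : ℝ) T, ∀ m₁ ∈ simplex S, ∀ m₂ ∈ simplex S,
    |D.lam k t m₁ - D.lam k t m₂| ≤ Llam * ‖m₁ - m₂‖
  J_bdd : ∀ t ∈ Set.Icc (0 : ℝ) T, ∀ j : Fin S,
    (Finset.univ.filter fun i => D.J t i = j).card ≤ Jmax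

/-- The constant `v_max`. -/
noncomputable def vmaxC (n : ℕ) (T Psimax psimax Qmax lammax : ℝ) : ℝ :=
  (Psimax + psimax * T) * Real.exp ((Qmax + lammax) * T) *
    ∑ i ∈ Finset.range (n + 1), (Real.exp ((Qmax + lammax) * T) * lammax * T) ^ i

/-- The constant `K₁ = L_ψ̂ + L_Q̂ v_max + 2 v_max L_λ`. -/
noncomputable def K1C (n : ℕ) (T Lpsi LQ Llam Psimax psimax Qmax lammax : ℝ) : ℝ :=
  Lpsi + LQ * vmaxC n T Psimax psimax Qmax lammax +
    2 * vmaxC n T Psimax psimax Qmax lammax * Llam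

/-- The constant `K₂ = L_ψ̂ + v_max L_Q̂ + Qmax + λmax`. -/
noncomputable def K2C (n : ℕ) (T Lpsi LQ Psimax psimax Qmax lammax : ℝ) : ℝ :=
  Lpsi + vmaxC n T Psimax psimax Qmax lammax * LQ + Qmax + lammax

/-- The right-hand side of the backward equation (E1), written for the integral
(Carathéodory) formulation `v(t,u) = Ψ(Z(u),μ(T,u)) + ∫_t^T (E1rhs)(s) ds`. -/
noncomputable def E1rhs {S n : ℕ} (D : Model S n)
    (μ v : ℝ → (Fin n → ℝ) → Fin S → ℝ) (u : Fin n → ℝ) (i : Fin S) (s : ℝ) : ℝ :=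
  D.psi s u (μ s u) (v s u) i + (∑ j, D.Q s u (μ s u) (v s u) i j * v s u j) +
    (if Zu u < n then
      D.lam (Zu u + 1) s (μ s u) * (v s (push u s) (D.J s i) - v s u i)
    else 0)

/-- `v` is a (Carathéodory) solution of the backward equation (E1) with terminal
condition (E3), given the flow `μ`. -/
def SolBackward (S n : ℕ) (T : ℝ) (D : Model S n)
    (μ v : ℝ → (Fin n → ℝ) → Fin S → ℝ) : Prop :=
  ∀ u : Fin n → ℝ, memU n T u →
    (∀ i : Fin S, v T u i = D.Psi (Zu u) (μ T u) i) ∧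
    ∀ t : ℝ, memTS n T t u → ∀ i : Fin S,
      IntervalIntegrable (E1rhs D μ v u i) volume t T ∧
      v t u i = D.Psi (Zu u) (μ T u) i + ∫ s in t..T, E1rhs D μ v u i s

/-- The right-hand side of the forward equation (E2). -/
noncomputable def E2rhs {S n : ℕ} (D : Model S n)
    (v μ : ℝ → (Fin n → ℝ) → Fin S → ℝ) (u : Fin n → ℝ) (i : Fin S) (s : ℝ) : ℝ :=
  ∑ j, μ s u j * D.Q s u (μ s u) (v s u) j i

/-- `μ` is a (Carathéodory) solution of the forward equation (E2) with initial
condition (E4) and consistency conditions (E5), given the value function `v`. -/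
def SolForward (S n : ℕ) (T : ℝ) (D : Model S n)
    (v μ : ℝ → (Fin n → ℝ) → Fin S → ℝ) : Prop :=
  (∀ i, μ 0 (fun _ => (-1 : ℝ)) i = D.m0 i) ∧
  (∀ u : Fin n → ℝ, memU n T u → 1 ≤ Zu u → ∀ j : Fin S,
    μ (lastTime u) u j =
      ∑ i, if D.J (lastTime u) i = j then μ (lastTime u) (pop u) i else 0) ∧
  (∀ u : Fin n → ℝ, memU n T u → ∀ t : ℝ, memTS n T t u → ∀ i : Fin S,
    IntervalIntegrable (E2rhs D v μ u i) volume (startTime u) t ∧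
    μ t u i = μ (startTime u) u i + ∫ s in (startTime u)..t, E2rhs D v μ u i s)

/-- Membership in `M`: a `𝒫(𝕊)`-valued function on `TS` that is `Qmax`-Lipschitz in time. -/
def MemM (S n : ℕ) (T Qmax : ℝ) (μ : ℝ → (Fin n → ℝ) → Fin S → ℝ) : Prop :=
  (∀ t u, memTS n T t u → μ t u ∈ simplex S) ∧
  ∀ u : Fin n → ℝ, memU n T u → ∀ t₁ t₂ : ℝ, memTS n T t₁ u → memTS n T t₂ u →
    ‖μ t₁ u - μ t₂ u‖ ≤ Qmax * |t₁ - t₂|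

/-- Membership in `V`: a regular function on `TS` bounded by `v_max` in supremum norm. -/
def MemV (S n : ℕ) (T vmaxVal : ℝ) (v : ℝ → (Fin n → ℝ) → Fin S → ℝ) : Prop :=
  Regular S n T v ∧ ∀ t u, memTS n T t u → ‖v t u‖ ≤ vmaxVal

/-- The supremum norm over `TS` of a function `f : TS → ℝ^S`. -/
noncomputable def supTS (S n : ℕ) (T : ℝ) (f : ℝ → (Fin n → ℝ) → Fin S → ℝ) : ℝ :=
  sSup {r : ℝ | ∃ t u, memTS n T t u ∧ r = ‖f t u‖}

end MFGShocks

namespace MFGShocks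

open Set Filter Topology

set_option maxHeartbeats 1000000





lemma card_filter_val_lt (n k : ℕ) (hk : k ≤ n) :
    (Finset.univ.filter fun i : Fin n => (i : ℕ) < k).card = k := by
  have h : (Finset.univ.filter fun i : Fin n => (i : ℕ) < k) =
      (Finset.range k).attachFin (fun m hm => lt_of_lt_of_le (Finset.mem_range.mp hm) hk) := by
    ext i
    simp [Finset.mem_attachFin]
  rw [h, Finset.card_attachFin, Finset.card_range]

lemma Zu_le {n : ℕ} (u : Fin n → ℝ) : Zu u ≤ n := by
  classical
  calc Zu u ≤ Finset.univ.card := Finset.card_filter_le _ _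
    _ = n := by simp

lemma memU_spec {n : ℕ} {T : ℝ} {u : Fin n → ℝ} (hT : 0 < T) (h : memU n T u) :
    (∀ i : Fin n, (i : ℕ) < Zu u → u i ∈ Set.Icc (0 : ℝ) T) ∧
    (∀ i j : Fin n, (j : ℕ) < Zu u → i ≤ j → u i ≤ u j) ∧
    (∀ i : Fin n, Zu u ≤ (i : ℕ) → u i = -1) := by
  obtain ⟨k, hk, h1, h2, h3⟩ := h
  have hZ : Zu u = k := by
    have hset : (Finset.univ.filter fun i : Fin n => u i ≠ -1) =
        (Finset.univ.filter fun i : Fin n => (i : ℕ) < k) := by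
      ext i
      simp only [Finset.mem_filter, Finset.mem_univ, true_and]
      constructor
      · intro hi
        by_contra hik
        exact hi (h3 i (not_lt.mp hik))
      · intro hik hc
        have hmem := h1 i hik
        rw [hc] at hmem
        linarith [hmem.1]
    rw [Zu, hset, card_filter_val_lt n k hk]
  rw [hZ]
  exact ⟨h1, h2, h3⟩

lemma u_eq_neg_one_of_Zu_zero {n : ℕ} {T : ℝ} {u : Fin n → ℝ} (hT : 0 < T) (h : memU n T u)
    (hZ : Zu u = 0) : u = fun _ => (-1 : ℝ) := by
  funext i
  exact (memU_spec hT h).2.2 i (by omega)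

lemma lastTime_eq {n : ℕ} {u : Fin n → ℝ} (hZ : 1 ≤ Zu u) :
    ∃ hlt : Zu u - 1 < n, lastTime u = u ⟨Zu u - 1, hlt⟩ := by
  have h1 : Zu u - 1 < n := by
    have := Zu_le u
    omega
  exact ⟨h1, by rw [lastTime, dif_pos h1]⟩

lemma startTime_mem_Icc {n : ℕ} {T : ℝ} {u : Fin n → ℝ} (hT : 0 < T) (h : memU n T u) :
    startTime u ∈ Set.Icc (0 : ℝ) T := by
  by_cases hZ : Zu u = 0
  · rw [startTime, if_pos hZ]
    exact ⟨le_refl _, hT.le⟩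
  · obtain ⟨hlt, heq⟩ := lastTime_eq (by omega : 1 ≤ Zu u)
    rw [startTime, if_neg hZ, heq]
    exact (memU_spec hT h).1 _ (by simp; omega)

lemma coord_le_startTime {n : ℕ} {T : ℝ} {u : Fin n → ℝ} (hT : 0 < T) (h : memU n T u) :
    ∀ i, u i ≤ startTime u := by
  intro i
  obtain ⟨h1, h2, h3⟩ := memU_spec hT h
  by_cases hZ : Zu u = 0
  · rw [startTime, if_pos hZ, h3 i (by omega)]
    linarith
  · obtain ⟨hlt, heq⟩ := lastTime_eq (by omega : 1 ≤ Zu u)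
    rw [startTime, if_neg hZ, heq]
    by_cases hi : (i : ℕ) < Zu u
    · exact h2 i ⟨Zu u - 1, hlt⟩ (by simp; omega) (by rw [Fin.le_def]; simp; omega)
    · rw [h3 i (not_lt.mp hi)]
      have := h1 ⟨Zu u - 1, hlt⟩ (by simp; omega)
      linarith [this.1]

lemma memTS_of_icc {n : ℕ} {T : ℝ} {u : Fin n → ℝ} (hT : 0 < T) (h : memU n T u)
    {s : ℝ} (h1 : startTime u ≤ s) (h2 : s ≤ T) : memTS n T s u :=
  ⟨h, ⟨le_trans (startTime_mem_Icc hT h).1 h1, h2⟩,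
    fun i => le_trans (coord_le_startTime hT h i) h1⟩

lemma startTime_le_of_memTS {n : ℕ} {T : ℝ} {t : ℝ} {u : Fin n → ℝ} (hT : 0 < T)
    (h : memTS n T t u) : startTime u ≤ t := by
  by_cases hZ : Zu u = 0
  · rw [startTime, if_pos hZ]
    exact h.2.1.1
  · obtain ⟨hlt, heq⟩ := lastTime_eq (by omega : 1 ≤ Zu u)
    rw [startTime, if_neg hZ, heq]
    exact h.2.2 _

lemma Zu_pop {n : ℕ} {T : ℝ} {u : Fin n → ℝ} (hT : 0 < T) (h : memU n T u) (hZ : 1 ≤ Zu u) :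
    Zu (pop u) = Zu u - 1 := by
  obtain ⟨h1, h2, h3⟩ := memU_spec hT h
  have hset : (Finset.univ.filter fun i : Fin n => pop u i ≠ -1) =
      (Finset.univ.filter fun i : Fin n => (i : ℕ) < Zu u - 1) := by
    ext i
    simp only [Finset.mem_filter, Finset.mem_univ, true_and]
    simp only [pop]
    by_cases hc : (i : ℕ) + 1 = Zu u
    · simp only [if_pos hc]
      constructor
      · intro hcon; exact absurd rfl hcon
      · intro hi; omega
    · simp only [if_neg hc]
      constructor
      · intro hi
        have : (i : ℕ) < Zu u := by
          by_contra hge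
          exact hi (h3 i (not_lt.mp hge))
        omega
      · intro hi
        have hmem := h1 i (by omega)
        intro hcon
        rw [hcon] at hmem
        linarith [hmem.1]
  have hle : Zu u - 1 ≤ n := by have := Zu_le u; omega
  rw [Zu, hset, card_filter_val_lt n _ hle]

lemma memU_pop {n : ℕ} {T : ℝ} {u : Fin n → ℝ} (hT : 0 < T) (h : memU n T u) (hZ : 1 ≤ Zu u) :
    memU n T (pop u) := by
  obtain ⟨h1, h2, h3⟩ := memU_spec hT h
  refine ⟨Zu u - 1, by have := Zu_le u; omega, ?_, ?_, ?_⟩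
  · intro i hi
    rw [pop, if_neg (by omega : ¬ (i : ℕ) + 1 = Zu u)]
    exact h1 i (by omega)
  · intro i j hj hij
    have hij' : (i : ℕ) ≤ (j : ℕ) := hij
    rw [pop, pop, if_neg (by omega : ¬ (i : ℕ) + 1 = Zu u),
      if_neg (by omega : ¬ (j : ℕ) + 1 = Zu u)]
    exact h2 i j (by omega) hij
  · intro i hi
    rw [pop]
    by_cases hc : (i : ℕ) + 1 = Zu u
    · rw [if_pos hc]
    · rw [if_neg hc]
      exact h3 i (by omega)

lemma memTS_lastTime_pop {n : ℕ} {T : ℝ} {u : Fin n → ℝ} (hT : 0 < T) (h : memU n T u)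
    (hZ : 1 ≤ Zu u) : memTS n T (lastTime u) (pop u) := by
  obtain ⟨h1, h2, h3⟩ := memU_spec hT h
  obtain ⟨hlt, heq⟩ := lastTime_eq hZ
  have hmemIcc : lastTime u ∈ Set.Icc (0:ℝ) T := by
    rw [heq]; exact h1 _ (by simp; omega)
  refine ⟨memU_pop hT h hZ, hmemIcc, ?_⟩
  intro i
  rw [pop]
  by_cases hc : (i : ℕ) + 1 = Zu u
  · rw [if_pos hc]
    linarith [hmemIcc.1]
  · rw [if_neg hc]
    by_cases hi : (i : ℕ) < Zu u
    · rw [heq]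
      exact h2 i ⟨Zu u - 1, hlt⟩ (by simp; omega) (by rw [Fin.le_def]; simp; omega)
    · rw [h3 i (not_lt.mp hi)]
      linarith [hmemIcc.1]

lemma startTime_eq_lastTime {n : ℕ} {u : Fin n → ℝ} (hZ : 1 ≤ Zu u) :
    startTime u = lastTime u := by
  rw [startTime, if_neg (by omega : ¬ Zu u = 0)]

lemma memTS_zero (n : ℕ) (T : ℝ) (hT : 0 < T) :
    memTS n T 0 (fun _ => (-1 : ℝ)) := by
  refine ⟨⟨0, Nat.zero_le n, ?_, ?_, fun i _ => rfl⟩, ⟨le_refl _, hT.le⟩, fun i => by norm_num⟩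
  · intro i hi; omega
  · intro i j hj _; omega


/-- Lebesgue differentiation for primitives of nonnegative integrable functions. -/
lemma ae_hasDerivAt_primitive_nonneg {g : ℝ → ℝ} (hm : Measurable g) (h0 : ∀ x, 0 ≤ g x)
    (hint : Integrable g) (a : ℝ) :
    ∀ᵐ t, HasDerivAt (fun s => ∫ x in a..s, g x) (g t) t := by
  have hii : ∀ c d : ℝ, IntervalIntegrable g volume c d := fun c d => hint.intervalIntegrable
  set F : ℝ → ℝ := fun s => ∫ x in a..s, g x with hF
  have hsub : ∀ s t : ℝ, F t - F s = ∫ x in s..t, g x := fun s t =>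
    intervalIntegral.integral_interval_sub_left (hii a t) (hii a s)
  have hmono : Monotone F := by
    intro s t hst
    have h1 : 0 ≤ ∫ x in s..t, g x := intervalIntegral.integral_nonneg hst fun x _ => h0 x
    have := hsub s t
    linarith
  have hcont : Continuous F := intervalIntegral.continuous_primitive hii a
  have hrl : ∀ x, Function.rightLim F x = F x := fun x =>
    rightLim_eq_of_tendsto
      ((hcont.tendsto x).mono_left nhdsWithin_le_nhds)
  have hkey : hmono.stieltjesFunction.measure
      = volume.withDensity (fun x => ENNReal.ofReal (g x)) := by
    refine MeasureTheory.Measure.ext_of_Ioc _ _ (fun s t hst => ?_)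
    rw [StieltjesFunction.measure_Ioc]
    have h1 : hmono.stieltjesFunction t = F t := by rw [hmono.stieltjesFunction_eq, hrl]
    have h2 : hmono.stieltjesFunction s = F s := by rw [hmono.stieltjesFunction_eq, hrl]
    rw [h1, h2, withDensity_apply _ measurableSet_Ioc, hsub s t,
      intervalIntegral.integral_of_le hst.le,
      ← ofReal_integral_eq_lintegral_ofReal hint.integrableOn
        (Filter.Eventually.of_forall fun x => h0 x)]
  filter_upwards [hmono.ae_hasDerivAt,
    Measure.rnDeriv_withDensity volume (hm.ennreal_ofReal)] with t ht hrd
  rw [hkey] at ht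
  rw [hrd] at ht
  rwa [ENNReal.toReal_ofReal (h0 t)] at ht

/-- Lebesgue differentiation for primitives of integrable functions. -/
lemma ae_hasDerivAt_primitive {g : ℝ → ℝ} (hm : Measurable g) (hint : Integrable g) (a : ℝ) :
    ∀ᵐ t, HasDerivAt (fun s => ∫ x in a..s, g x) (g t) t := by
  have h1 := ae_hasDerivAt_primitive_nonneg (g := fun x => max (g x) 0)
    (hm.max measurable_const) (fun x => le_max_right _ _) hint.pos_part a
  have hi2 : Integrable (fun x => max (-g x) 0) volume := by
    simpa [Pi.neg_apply] using hint.neg.pos_part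
  have h2 := ae_hasDerivAt_primitive_nonneg (g := fun x => max (-g x) 0)
    (hm.neg.max measurable_const) (fun x => le_max_right _ _) hi2 a
  filter_upwards [h1, h2] with t ht1 ht2
  have hder := ht1.sub ht2
  have heq : (fun s => (∫ x in a..s, max (g x) 0) - ∫ x in a..s, max (-g x) 0)
      = fun s => ∫ x in a..s, g x := by
    funext s
    rw [← intervalIntegral.integral_sub hint.pos_part.intervalIntegrable
      hi2.intervalIntegrable]
    apply intervalIntegral.integral_congr
    intro x _
    show g x ⊔ 0 - -g x ⊔ 0 = g x
    rcases le_total (g x) 0 with h | h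
    · rw [max_eq_right h, max_eq_left (neg_nonneg.mpr h)]; ring
    · rw [max_eq_left h, max_eq_right (neg_nonpos.mpr h)]; ring
  change HasDerivAt (fun s => (∫ x in a..s, max (g x) 0) - ∫ x in a..s, max (-g x) 0) _ t at hder
  rw [heq] at hder
  have hval : max (g t) 0 - max (-g t) 0 = g t := by
    rcases le_total (g t) 0 with h | h
    · rw [max_eq_right h, max_eq_left (neg_nonneg.mpr h)]; ring
    · rw [max_eq_left h, max_eq_right (neg_nonpos.mpr h)]; ring
  rwa [hval] at hder


/-- Positivity invariance for systems with a cooperative sign structure. -/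
lemma pos_invariance {S : ℕ} {a b : ℝ} (hab : a ≤ b) (f ρ : Fin S → ℝ → ℝ)
    (hint : ∀ i, IntervalIntegrable (ρ i) volume a b)
    (hid : ∀ i, ∀ t ∈ Set.Icc a b, f i t = f i a + ∫ s in a..t, ρ i s)
    (hstart : ∀ i, 0 ≤ f i a)
    (hsign : ∀ t ∈ Set.Ioo a b, ∀ N' : Finset (Fin S),
      (∀ i, f i t < 0 → i ∈ N') → (∀ i ∈ N', f i t ≤ 0) → 0 ≤ ∑ i ∈ N', ρ i t) :
    ∀ i, 0 ≤ f i b := by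
  classical
  have hccInt : ∀ i, IntegrableOn (ρ i) (Set.Icc a b) volume := fun i =>
    (intervalIntegrable_iff_integrableOn_Icc_of_le hab).mp (hint i)
  have hAE : ∀ i, AEMeasurable (ρ i) (volume.restrict (Set.Icc a b)) := fun i =>
    (hccInt i).aemeasurable
  set ρ' : Fin S → ℝ → ℝ :=
    fun i => Set.indicator (Set.Icc a b) ((hAE i).mk (ρ i)) with hρ'def
  have hρ'm : ∀ i, Measurable (ρ' i) := fun i =>
    ((hAE i).measurable_mk).indicator measurableSet_Icc
  have hρeq : ∀ i, ∀ᵐ t, t ∈ Set.Icc a b → ρ i t = ρ' i t := by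
    intro i
    have h : ∀ᵐ t, t ∈ Set.Icc a b → ρ i t = (hAE i).mk (ρ i) t :=
      (ae_restrict_iff' measurableSet_Icc).mp (hAE i).ae_eq_mk
    filter_upwards [h] with t ht hmem
    rw [ht hmem]
    simp only [hρ'def]
    rw [Set.indicator_of_mem hmem]
  have hρ'int : ∀ i, Integrable (ρ' i) := by
    intro i
    rw [hρ'def]
    rw [integrable_indicator_iff measurableSet_Icc]
    exact (hccInt i).congr (hAE i).ae_eq_mk
  -- primitives
  set F : Fin S → ℝ → ℝ := fun i s => f i a + ∫ x in a..s, ρ' i x with hFdef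
  have hFcont : ∀ i, Continuous (F i) := fun i =>
    continuous_const.add
      (intervalIntegral.continuous_primitive (fun _ _ => (hρ'int i).intervalIntegrable) a)
  have hFf : ∀ i, ∀ t ∈ Set.Icc a b, F i t = f i t := by
    intro i t ht
    rw [hid i t ht, hFdef]
    simp only
    congr 1
    refine intervalIntegral.integral_congr_ae ?_
    filter_upwards [hρeq i] with x hx hmem
    rw [Set.uIoc_of_le ht.1] at hmem
    exact (hx ⟨hmem.1.le, hmem.2.trans ht.2⟩).symm
  have hFa : ∀ i, F i a = f i a := by
    intro i; simp [hFdef]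
  -- envelope
  set G : ℝ → ℝ := fun s => ∑ i, |ρ' i s| with hGdef
  have hGm : Measurable G := Finset.measurable_sum _ fun i _ => (hρ'm i).abs
  have hGint : Integrable G := integrable_finset_sum _ fun i _ => (hρ'int i).abs
  have hG0 : ∀ s, 0 ≤ G s := fun s => Finset.sum_nonneg fun i _ => abs_nonneg _
  set P : ℝ → ℝ := fun s => ∫ x in a..s, G x with hPdef
  set V : ℝ → ℝ := fun s => ∑ i, min (F i s) 0 with hVdef
  set W : ℝ → ℝ := fun s => V s + P s with hWdef
  have hWmono : Monotone W := by
    intro s t hst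
    have hsum : V s - V t ≤ P t - P s := by
      have h1 : ∀ i, min (F i s) 0 - min (F i t) 0 ≤ ∫ x in s..t, |ρ' i x| := by
        intro i
        have ha1 : |min (F i s) 0 - min (F i t) 0| ≤ |F i s - F i t| := by
          have := abs_min_sub_min_le_max (F i s) (0 : ℝ) (F i t) (0 : ℝ)
          simpa using this
        have ha2 : F i t - F i s = ∫ x in s..t, ρ' i x := by
          simp only [hFdef, add_sub_add_left_eq_sub]
          exact intervalIntegral.integral_interval_sub_left
            ((hρ'int i).intervalIntegrable) ((hρ'int i).intervalIntegrable)
        have ha3 : |∫ x in s..t, ρ' i x| ≤ ∫ x in s..t, |ρ' i x| :=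
          intervalIntegral.abs_integral_le_integral_abs hst
        have ha4 : |F i s - F i t| = |F i t - F i s| := abs_sub_comm _ _
        have := (abs_le.mp ((ha1.trans_eq ha4).trans_eq (congrArg abs ha2))).2.trans ha3
        linarith [abs_le.mp (((ha1.trans_eq ha4).trans_eq (congrArg abs ha2)).trans ha3)]
      have h2 : P t - P s = ∫ x in s..t, G x := by
        simp only [hPdef]
        exact intervalIntegral.integral_interval_sub_left
          hGint.intervalIntegrable hGint.intervalIntegrable
      have h3 : ∫ x in s..t, G x = ∑ i, ∫ x in s..t, |ρ' i x| := by
        simp only [hGdef]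
        exact intervalIntegral.integral_finset_sum fun i _ => (hρ'int i).abs.intervalIntegrable
      have h4 : V s - V t ≤ ∑ i, ∫ x in s..t, |ρ' i x| := by
        rw [hVdef]
        simp only [← Finset.sum_sub_distrib]
        exact Finset.sum_le_sum fun i _ => h1 i
      rw [h2, h3]
      exact h4
    simp only [hWdef]
    linarith
  have hWcont : Continuous W :=
    ((continuous_finset_sum _ fun i _ => (hFcont i).min continuous_const)).add
      (intervalIntegral.continuous_primitive (fun _ _ => hGint.intervalIntegrable) a)
  have hrlW : ∀ x, Function.rightLim W x = W x := fun x =>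
    rightLim_eq_of_tendsto
      ((hWcont.tendsto x).mono_left nhdsWithin_le_nhds)
  set ν := hWmono.stieltjesFunction.measure with hνdef
  -- the key a.e. derivative bound
  have hmain : ∀ᵐ t, t ∈ Set.Ioo a b →
      ENNReal.ofReal (G t) ≤ ν.rnDeriv volume t := by
    have hFall : ∀ᵐ t, ∀ i, HasDerivAt (fun s => ∫ x in a..s, ρ' i x) (ρ' i t) t :=
      ae_all_iff.mpr fun i => ae_hasDerivAt_primitive (hρ'm i) (hρ'int i) a
    have hρall : ∀ᵐ t, ∀ i, t ∈ Set.Icc a b → ρ i t = ρ' i t := ae_all_iff.mpr hρeq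
    have hPder := ae_hasDerivAt_primitive hGm hGint a
    filter_upwards [hWmono.ae_hasDerivAt, hPder, hFall, hρall] with t hWd hPd hFd hρt htIoo
    have htIcc : t ∈ Set.Icc a b := ⟨htIoo.1.le, htIoo.2.le⟩
    have hFder : ∀ i, HasDerivAt (F i) (ρ' i t) t := fun i => (hFd i).const_add _
    obtain ⟨d, hd⟩ : ∃ d : Fin S → ℝ, ∀ i,
        d i = if F i t < 0 then ρ' i t else if F i t = 0 then min (ρ' i t) 0 else 0 :=
      ⟨_, fun _ => rfl⟩
    have hmin : ∀ i, HasDerivWithinAt (fun s => min (F i s) 0) (d i) (Set.Ioi t) t := by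
      intro i
      rcases lt_trichotomy (F i t) 0 with hlt | heq0 | hgt
      · have hev : ∀ᶠ s in 𝓝[Set.Ioi t] t, min (F i s) 0 = F i s := by
          have h1 : ∀ᶠ s in 𝓝 t, F i s < 0 :=
            (hFcont i).continuousAt.eventually_lt continuousAt_const hlt
          exact (h1.mono fun s hs => min_eq_left hs.le).filter_mono nhdsWithin_le_nhds
        have : HasDerivWithinAt (F i) (ρ' i t) (Set.Ioi t) t := (hFder i).hasDerivWithinAt
        have hres := this.congr_of_eventuallyEq hev (min_eq_left hlt.le)
        rw [hd i, if_pos hlt]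
        exact hres
      · have hslope : Tendsto (slope (F i) t) (𝓝[Set.Ioi t] t) (𝓝 (ρ' i t)) := by
          have := hasDerivWithinAt_iff_tendsto_slope.mp
            ((hFder i).hasDerivWithinAt (s := Set.Ioi t))
          simpa [Set.diff_singleton_eq_self (fun h => lt_irrefl t h : t ∉ Set.Ioi t)] using this
        have hcomp : Tendsto (fun s => min (slope (F i) t s) 0) (𝓝[Set.Ioi t] t)
            (𝓝 (min (ρ' i t) 0)) := hslope.min tendsto_const_nhds
        rw [hd i, if_neg (not_lt.mpr heq0.ge), if_pos heq0]
        rw [hasDerivWithinAt_iff_tendsto_slope]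
        rw [Set.diff_singleton_eq_self (fun h => lt_irrefl t h : t ∉ Set.Ioi t)]
        refine hcomp.congr' ?_
        filter_upwards [self_mem_nhdsWithin] with s hs
        have hst : (0:ℝ) < s - t := sub_pos.mpr hs
        simp only [slope_def_field, heq0, sub_zero, min_self]
        rcases le_total (F i s) 0 with hc | hc
        · rw [min_eq_left (div_nonpos_of_nonpos_of_nonneg hc hst.le), min_eq_left hc]
        · rw [min_eq_right (div_nonneg hc hst.le), min_eq_right hc, zero_div]
      · have hev : ∀ᶠ s in 𝓝[Set.Ioi t] t, min (F i s) 0 = 0 := by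
          have h1 : ∀ᶠ s in 𝓝 t, 0 < F i s :=
            continuousAt_const.eventually_lt (hFcont i).continuousAt hgt
          exact (h1.mono fun s hs => min_eq_right hs.le).filter_mono nhdsWithin_le_nhds
        have hres := (hasDerivWithinAt_const t (Set.Ioi t) (0:ℝ)).congr_of_eventuallyEq hev
          (min_eq_right hgt.le)
        rw [hd i, if_neg (not_lt.mpr hgt.le), if_neg (ne_of_gt hgt)]
        exact hres
    have hVder : HasDerivWithinAt V (∑ i, d i) (Set.Ioi t) t := by
      rw [hVdef]
      exact HasDerivWithinAt.fun_sum fun i _ => hmin i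
    have hWder2 : HasDerivWithinAt W (∑ i, d i + G t) (Set.Ioi t) t :=
      hVder.add (hPd.hasDerivWithinAt)
    have huniq : (ν.rnDeriv volume t).toReal = ∑ i, d i + G t :=
      (uniqueDiffWithinAt_Ioi t).eq_deriv _ hWd.hasDerivWithinAt hWder2
    have hd0 : 0 ≤ ∑ i, d i := by
      set N' : Finset (Fin S) :=
        Finset.univ.filter (fun i => f i t < 0 ∨ (f i t = 0 ∧ ρ i t < 0)) with hN'
      have hmem : ∀ i, f i t < 0 → i ∈ N' := fun i hi =>
        Finset.mem_filter.mpr ⟨Finset.mem_univ _, Or.inl hi⟩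
      have hle : ∀ i ∈ N', f i t ≤ 0 := by
        intro i hi
        rcases (Finset.mem_filter.mp hi).2 with h | h
        · exact h.le
        · exact h.1.le
      have hsum := hsign t htIoo N' hmem hle
      have heqsum : ∑ i ∈ N', ρ i t = ∑ i, d i := by
        rw [hN', Finset.sum_filter]
        refine Finset.sum_congr rfl fun i _ => ?_
        have hfF : f i t = F i t := (hFf i t htIcc).symm
        have hρρ' : ρ i t = ρ' i t := hρt i htIcc
        rw [hd i]
        by_cases h1 : F i t < 0
        · rw [if_pos (Or.inl (by rw [hfF]; exact h1)), if_pos h1, hρρ']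
        · by_cases h2 : F i t = 0
          · by_cases h3 : ρ i t < 0
            · rw [if_pos (Or.inr ⟨by rw [hfF]; exact h2, h3⟩), if_neg h1, if_pos h2, ← hρρ']
              exact (min_eq_left h3.le).symm
            · have hnot : ¬(f i t < 0 ∨ (f i t = 0 ∧ ρ i t < 0)) := by
                rw [hfF]; push_neg
                exact ⟨not_lt.mp h1, fun _ => not_lt.mp h3⟩
              rw [if_neg hnot, if_neg h1, if_pos h2]
              refine (min_eq_right ?_).symm
              rw [← hρρ']
              exact not_lt.mp h3
          · have hnot : ¬(f i t < 0 ∨ (f i t = 0 ∧ ρ i t < 0)) := by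
              rw [hfF]; push_neg
              exact ⟨not_lt.mp h1, fun hh => absurd hh h2⟩
            rw [if_neg hnot, if_neg h1, if_neg h2]
      rw [← heqsum]
      exact hsum
    have hfinal : G t ≤ (ν.rnDeriv volume t).toReal := by
      rw [huniq]; linarith
    calc ENNReal.ofReal (G t) ≤ ENNReal.ofReal ((ν.rnDeriv volume t).toReal) :=
          ENNReal.ofReal_le_ofReal hfinal
      _ ≤ ν.rnDeriv volume t := ENNReal.ofReal_toReal_le
  -- integral comparison
  haveI : IsLocallyFiniteMeasure ν := by rw [hνdef]; infer_instance
  have hPba : P b = ∫ x in Set.Ioo a b, G x := by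
    rw [hPdef]
    simp only
    rw [intervalIntegral.integral_of_le hab, integral_Ioc_eq_integral_Ioo]
  have hchain : ENNReal.ofReal (P b) ≤ ENNReal.ofReal (W b - W a) := by
    calc ENNReal.ofReal (P b) = ∫⁻ x in Set.Ioo a b, ENNReal.ofReal (G x) := by
          rw [hPba]
          exact ofReal_integral_eq_lintegral_ofReal hGint.integrableOn
            (Filter.Eventually.of_forall fun x => hG0 x)
      _ ≤ ∫⁻ x in Set.Ioo a b, ν.rnDeriv volume x := by
          refine lintegral_mono_ae ?_
          rw [ae_restrict_iff' measurableSet_Ioo]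
          exact hmain
      _ ≤ ∫⁻ x in Set.Ioc a b, ν.rnDeriv volume x :=
          lintegral_mono_set Set.Ioo_subset_Ioc_self
      _ ≤ ν (Set.Ioc a b) := Measure.setLIntegral_rnDeriv_le _
      _ = ENNReal.ofReal (W b - W a) := by
          rw [hνdef, StieltjesFunction.measure_Ioc, hWmono.stieltjesFunction_eq,
            hWmono.stieltjesFunction_eq, hrlW, hrlW]
  have hWba : P b ≤ W b - W a := by
    have h0 : (0:ℝ) ≤ W b - W a := sub_nonneg.mpr (hWmono hab)
    exact (ENNReal.ofReal_le_ofReal_iff h0).mp hchain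
  have hPa : P a = 0 := by simp [hPdef]
  have hVb : 0 ≤ V b := by
    have : W b - W a = V b - V a + (P b - P a) := by simp only [hWdef]; ring
    have hVa : V a = 0 := by
      rw [hVdef]
      simp only
      refine Finset.sum_eq_zero fun i _ => ?_
      rw [hFa i]
      exact min_eq_right (hstart i)
    rw [this, hVa, hPa] at hWba
    linarith
  -- conclude positivity of each coordinate
  intro i
  have hterm : ∀ j : Fin S, min (F j b) 0 ≤ 0 := fun j => min_le_right _ _
  have hsum0 : ∑ j, min (F j b) 0 = 0 := by
    have h1 : ∑ j, min (F j b) 0 ≤ 0 := Finset.sum_nonpos fun j _ => hterm j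
    have h2 : 0 ≤ ∑ j, min (F j b) 0 := hVb
    linarith
  have hzero : min (F i b) 0 = 0 := by
    have := (Finset.sum_eq_zero_iff_of_nonpos fun j _ => hterm j).mp hsum0 i (Finset.mem_univ i)
    exact this
  have : 0 ≤ F i b := min_eq_right_iff.mp hzero
  rwa [hFf i b ⟨hab, le_refl b⟩] at this


/-- Grönwall inequality in integral form. -/
lemma gronwall {a b A B c₀ : ℝ} (hab : a ≤ b) (hA : 0 ≤ A) (hB : 0 ≤ B) (hc : 0 ≤ c₀)
    {r : ℝ → ℝ} (hr : IntervalIntegrable r volume a b)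
    (hrpos : ∀ s ∈ Set.Icc a b, 0 ≤ r s)
    (hbound : ∀ s ∈ Set.Icc a b, r s ≤ A * (c₀ + ∫ x in a..s, r x) + B) :
    c₀ + (∫ x in a..b, r x) ≤ (c₀ + B * (b - a)) * Real.exp (A * (b - a)) := by
  classical
  set Φ : ℕ → ℝ → ℝ := fun k t => (A * (t - a)) ^ k / (Nat.factorial k) with hΦ
  have hΦcont : ∀ k, Continuous (Φ k) := fun k =>
    ((continuous_const.mul (continuous_id.sub continuous_const)).pow k).div_const _
  have hΦ0 : ∀ t, Φ 0 t = 1 := fun t => by simp [hΦ]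
  have hΦnonneg : ∀ k, ∀ t, a ≤ t → 0 ≤ Φ k t := fun k t ht =>
    div_nonneg (pow_nonneg (mul_nonneg hA (by linarith)) k) (Nat.cast_nonneg _)
  have hΦint : ∀ k t, A * (∫ s in a..t, Φ k s) = Φ (k + 1) t := by
    intro k t
    have h1 : (∫ s in a..t, Φ k s) = (∫ s in a..t, (A * (s - a)) ^ k) / (Nat.factorial k) := by
      rw [← intervalIntegral.integral_div]
    have h2 : (∫ s in a..t, (A * (s - a)) ^ k) = A ^ k * ((t - a) ^ (k + 1) / (k + 1)) := by
      have ha : (∫ s in a..t, (A * (s - a)) ^ k) = A ^ k * ∫ s in a..t, (s - a) ^ k := by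
        rw [← intervalIntegral.integral_const_mul]
        congr 1; funext s; rw [mul_pow]
      have hb : (∫ s in a..t, (s - a) ^ k) = ∫ s in (a - a)..(t - a), s ^ k := by
        have := intervalIntegral.integral_comp_sub_right (a := a) (b := t) (fun x => x ^ k) a
        simpa using this
      rw [ha, hb, sub_self, integral_pow]
      ring
    rw [h1, h2, hΦ]
    simp only [mul_pow, Nat.factorial_succ]
    have hk1 : ((k:ℝ) + 1) ≠ 0 := by positivity
    have hkf : ((Nat.factorial k : ℝ)) ≠ 0 := by
      exact_mod_cast Nat.cast_ne_zero.mpr (Nat.factorial_ne_zero k)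
    push_cast
    field_simp
    ring
  set u : ℝ → ℝ := fun s => c₀ + ∫ x in a..s, r x with hu
  have hrsub : ∀ s ∈ Set.Icc a b, IntervalIntegrable r volume a s := fun s hs =>
    hr.mono_set (by rw [Set.uIcc_of_le hs.1, Set.uIcc_of_le hab]; exact Set.Icc_subset_Icc le_rfl hs.2)
  have hrsub2 : ∀ s ∈ Set.Icc a b, IntervalIntegrable r volume s b := fun s hs =>
    hr.mono_set (by rw [Set.uIcc_of_le hs.2, Set.uIcc_of_le hab]; exact Set.Icc_subset_Icc hs.1 le_rfl)
  set U : ℝ := c₀ + ∫ x in a..b, r x with hU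
  have huleU : ∀ s ∈ Set.Icc a b, u s ≤ U := by
    intro s hs
    have h2 : (∫ x in a..b, r x) = (∫ x in a..s, r x) + ∫ x in s..b, r x :=
      (intervalIntegral.integral_add_adjacent_intervals (hrsub s hs) (hrsub2 s hs)).symm
    have h3 : 0 ≤ ∫ x in s..b, r x :=
      intervalIntegral.integral_nonneg hs.2 fun x hx => hrpos x ⟨hs.1.trans hx.1, hx.2⟩
    simp only [hu, hU]
    linarith
  have hU0 : 0 ≤ U := by
    have h := huleU a ⟨le_rfl, hab⟩
    have h0 : u a = c₀ := by simp [hu]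
    linarith
  set C : ℝ := c₀ + B * (b - a) with hC
  have hC0 : 0 ≤ C := by
    have : 0 ≤ B * (b - a) := mul_nonneg hB (by linarith)
    simp only [hC]; linarith
  have key : ∀ n : ℕ, ∀ t ∈ Set.Icc a b,
      u t ≤ C * (∑ k ∈ Finset.range n, Φ k t) + U * Φ n t := by
    intro n
    induction n with
    | zero =>
      intro t ht
      simpa [hΦ0] using (huleU t ht)
    | succ n ih =>
      intro t ht
      have hpt : ∀ s ∈ Set.Icc a t, r s ≤
          A * C * (∑ k ∈ Finset.range n, Φ k s) + A * U * Φ n s + B := by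
        intro s hs
        have hsmem : s ∈ Set.Icc a b := ⟨hs.1, hs.2.trans ht.2⟩
        have h1 : r s ≤ A * u s + B := hbound s hsmem
        have h2 := ih s hsmem
        have h3 := mul_le_mul_of_nonneg_left h2 hA
        have h4 : A * (C * ∑ k ∈ Finset.range n, Φ k s + U * Φ n s)
            = A * C * ∑ k ∈ Finset.range n, Φ k s + A * U * Φ n s := by ring
        rw [h4] at h3
        linarith
      have hpolyint : IntervalIntegrable
          (fun s => A * C * (∑ k ∈ Finset.range n, Φ k s) + A * U * Φ n s + B) volume a t := by
        apply Continuous.intervalIntegrable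
        exact ((continuous_const.mul (continuous_finset_sum _ fun k _ => hΦcont k)).add
          (continuous_const.mul (hΦcont n))).add continuous_const
      have hint2 : (∫ x in a..t, r x) ≤
          ∫ s in a..t, (A * C * (∑ k ∈ Finset.range n, Φ k s) + A * U * Φ n s + B) :=
        intervalIntegral.integral_mono_on ht.1 (hrsub t ht) hpolyint hpt
      have hsplit : (∫ s in a..t, (A * C * (∑ k ∈ Finset.range n, Φ k s) + A * U * Φ n s + B))
          = A * C * (∑ k ∈ Finset.range n, ∫ s in a..t, Φ k s)
            + A * U * (∫ s in a..t, Φ n s) + B * (t - a) := by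
        have hI1 : IntervalIntegrable
            (fun s => A * C * (∑ k ∈ Finset.range n, Φ k s)) volume a t :=
          (Continuous.intervalIntegrable (continuous_const.mul
            (continuous_finset_sum _ fun k _ => hΦcont k)) a t)
        have hI2 : IntervalIntegrable (fun s => A * U * Φ n s) volume a t :=
          (Continuous.intervalIntegrable (continuous_const.mul (hΦcont n)) a t)
        rw [intervalIntegral.integral_add (hI1.add hI2) intervalIntegrable_const,
          intervalIntegral.integral_add hI1 hI2,
          intervalIntegral.integral_const_mul, intervalIntegral.integral_const_mul,
          intervalIntegral.integral_finset_sum (fun k _ => (hΦcont k).intervalIntegrable a t),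
          intervalIntegral.integral_const, smul_eq_mul]
        ring
      have hstep : u t ≤ c₀ + B * (t - a)
          + C * (∑ k ∈ Finset.range n, Φ (k + 1) t) + U * Φ (n + 1) t := by
        have h4 : A * C * (∑ k ∈ Finset.range n, ∫ s in a..t, Φ k s)
            = C * ∑ k ∈ Finset.range n, Φ (k + 1) t := by
          rw [Finset.mul_sum, Finset.mul_sum]
          refine Finset.sum_congr rfl fun k _ => ?_
          rw [← hΦint k t]; ring
        have h5 : A * U * (∫ s in a..t, Φ n s) = U * Φ (n + 1) t := by
          rw [← hΦint n t]; ring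
        have := hint2.trans_eq hsplit
        rw [h4, h5] at this
        simp only [hu]
        linarith
      have hsum : c₀ + B * (t - a) + C * (∑ k ∈ Finset.range n, Φ (k + 1) t)
          ≤ C * (∑ k ∈ Finset.range (n + 1), Φ k t) := by
        have hshift : (∑ k ∈ Finset.range (n + 1), Φ k t)
            = (∑ k ∈ Finset.range n, Φ (k + 1) t) + Φ 0 t := Finset.sum_range_succ' _ _
        have hcB : c₀ + B * (t - a) ≤ C := by
          simp only [hC]
          have : B * (t - a) ≤ B * (b - a) := by
            apply mul_le_mul_of_nonneg_left _ hB
            linarith [ht.2]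
          linarith
        rw [hshift, hΦ0, mul_add, mul_one]
        have hsumnn : 0 ≤ ∑ k ∈ Finset.range n, Φ (k + 1) t :=
          Finset.sum_nonneg fun k _ => hΦnonneg (k + 1) t ht.1
        nlinarith [hC0]
      linarith
  have hfin : ∀ n : ℕ, U ≤ C * Real.exp (A * (b - a)) + U * Φ n b := by
    intro n
    have h1 := key n b ⟨hab, le_rfl⟩
    have h3 : (∑ k ∈ Finset.range n, Φ k b) ≤ Real.exp (A * (b - a)) := by
      simp only [hΦ]
      exact Real.sum_le_exp_of_nonneg (mul_nonneg hA (by linarith)) n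
    have h4 := mul_le_mul_of_nonneg_left h3 hC0
    have h2 : u b = U := rfl
    linarith [h1, h2 ▸ h1]
  have hlim : Tendsto (fun n : ℕ => C * Real.exp (A * (b - a)) + U * Φ n b) atTop
      (𝓝 (C * Real.exp (A * (b - a)) + U * 0)) := by
    refine tendsto_const_nhds.add ?_
    have h := FloorSemiring.tendsto_pow_div_factorial_atTop (K := ℝ) (A * (b - a))
    have h2 := h.const_mul U
    simp only [hΦ]
    simpa [mul_div_assoc] using h2
  have hfinal : U ≤ C * Real.exp (A * (b - a)) + U * 0 :=
    ge_of_tendsto hlim (Filter.Eventually.of_forall hfin)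
  rw [mul_zero, add_zero] at hfinal
  exact hfinal


/-- Any solution of the forward system stays in the simplex on `TS`. -/
lemma forward_simplex {S n : ℕ} {T : ℝ} {D : Model S n}
    {Lpsi LQ LPsi Llam Psimax psimax Qmax lammax : ℝ} {Jmax : ℕ}
    (H : Hyps S n T D Lpsi LQ LPsi Llam Psimax psimax Qmax lammax Jmax)
    (v μ : ℝ → (Fin n → ℝ) → Fin S → ℝ) (hμ : SolForward S n T D v μ) :
    ∀ t u, memTS n T t u → μ t u ∈ simplex S := by
  classical
  obtain ⟨hE4, hE5, hE2⟩ := hμ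
  have hT := H.hT
  suffices hmain : ∀ m : ℕ, ∀ u : Fin n → ℝ, memU n T u → Zu u = m →
      ∀ t, memTS n T t u → μ t u ∈ simplex S by
    intro t u h
    exact hmain (Zu u) u h.1 rfl t h
  intro m
  induction m using Nat.strong_induction_on with
  | _ m ih =>
    intro u hu hZu t ht
    have hstartmem : μ (startTime u) u ∈ simplex S := by
      rcases Nat.eq_zero_or_pos m with hm0 | hmpos
      · have hZ0 : Zu u = 0 := by omega
        have hueq : u = fun _ => (-1:ℝ) := u_eq_neg_one_of_Zu_zero hT hu hZ0
        have hst0 : startTime u = 0 := by rw [startTime, if_pos hZ0]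
        have hμ0 : μ 0 (fun _ => (-1:ℝ)) = D.m0 := funext (fun i => hE4 i)
        rw [hst0, hueq, hμ0]
        exact H.hm0
      · have hZ1 : 1 ≤ Zu u := by omega
        have hpopmem : μ (lastTime u) (pop u) ∈ simplex S := by
          have hZp := Zu_pop hT hu hZ1
          exact ih (m - 1) (by omega) (pop u) (memU_pop hT hu hZ1)
            (by rw [hZp, hZu]) (lastTime u) (memTS_lastTime_pop hT hu hZ1)
        have hE5u := hE5 u hu hZ1
        rw [startTime_eq_lastTime hZ1]
        constructor
        · intro j
          rw [hE5u j]
          refine Finset.sum_nonneg fun i _ => ?_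
          by_cases hc : D.J (lastTime u) i = j
          · rw [if_pos hc]; exact hpopmem.1 i
          · rw [if_neg hc]
        · calc ∑ j, μ (lastTime u) u j
              = ∑ j, ∑ i, if D.J (lastTime u) i = j then μ (lastTime u) (pop u) i else 0 :=
                Finset.sum_congr rfl fun j _ => hE5u j
            _ = ∑ i, ∑ j, if D.J (lastTime u) i = j then μ (lastTime u) (pop u) i else 0 :=
                Finset.sum_comm
            _ = ∑ i, μ (lastTime u) (pop u) i := by
                refine Finset.sum_congr rfl fun i _ => ?_
                rw [Finset.sum_ite_eq]
                simp
            _ = 1 := hpopmem.2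
    set a := startTime u with hadef
    have ha0 : a ≤ t := startTime_le_of_memTS hT ht
    have hsmem : ∀ s ∈ Set.Icc a t, memTS n T s u := fun s hs =>
      memTS_of_icc hT hu hs.1 (hs.2.trans ht.2.1.2)
    have hid : ∀ i : Fin S, ∀ s ∈ Set.Icc a t,
        μ s u i = μ a u i + ∫ x in a..s, E2rhs D v μ u i x := by
      intro i s hs
      exact (hE2 u hu s (hsmem s hs) i).2
    have hint : ∀ i : Fin S, IntervalIntegrable (E2rhs D v μ u i) volume a t :=
      fun i => (hE2 u hu t ht i).1
    have hsign : ∀ s ∈ Set.Ioo a t, ∀ N' : Finset (Fin S),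
        (∀ i, μ s u i < 0 → i ∈ N') → (∀ i ∈ N', μ s u i ≤ 0) →
        0 ≤ ∑ i ∈ N', E2rhs D v μ u i s := by
      intro s hs N' hmem hle
      have hswap : ∑ i ∈ N', E2rhs D v μ u i s
          = ∑ j, μ s u j * ∑ i ∈ N', D.Q s u (μ s u) (v s u) j i := by
        simp only [E2rhs]
        rw [Finset.sum_comm]
        exact Finset.sum_congr rfl fun j _ => (Finset.mul_sum _ _ _).symm
      rw [hswap]
      refine Finset.sum_nonneg fun j _ => ?_
      by_cases hj : j ∈ N'
      · have h1 : μ s u j ≤ 0 := hle j hj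
        have h2 : ∑ i ∈ N', D.Q s u (μ s u) (v s u) j i ≤ 0 := by
          have hrow : ∑ i, D.Q s u (μ s u) (v s u) j i = 0 :=
            H.Q_rowsum s u (μ s u) (v s u) j
          have hsplit : ∑ i ∈ N', D.Q s u (μ s u) (v s u) j i
              + ∑ i ∈ N'ᶜ, D.Q s u (μ s u) (v s u) j i
              = ∑ i, D.Q s u (μ s u) (v s u) j i := Finset.sum_add_sum_compl _ _
          have hcpos : 0 ≤ ∑ i ∈ N'ᶜ, D.Q s u (μ s u) (v s u) j i := by
            refine Finset.sum_nonneg fun i hi => ?_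
            refine H.Q_offdiag s u (μ s u) (v s u) j i ?_
            intro he
            exact (Finset.mem_compl.mp hi) (he ▸ hj)
          linarith
        have := mul_nonneg (neg_nonneg.mpr h1) (neg_nonneg.mpr h2)
        nlinarith [this]
      · have h1 : 0 ≤ μ s u j := by
          by_contra hc
          exact hj (hmem j (not_le.mp hc))
        have h2 : 0 ≤ ∑ i ∈ N', D.Q s u (μ s u) (v s u) j i := by
          refine Finset.sum_nonneg fun i hi => ?_
          exact H.Q_offdiag s u (μ s u) (v s u) j i (fun he => hj (he ▸ hi))
        exact mul_nonneg h1 h2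
    have hpos := pos_invariance ha0 (fun i s => μ s u i) (fun i s => E2rhs D v μ u i s)
      hint (fun i s hs => hid i s hs) (fun i => hstartmem.1 i) hsign
    have hmass : ∑ i, μ t u i = 1 := by
      have hsumid : ∑ i, μ t u i = (∑ i, μ a u i)
          + ∑ i : Fin S, ∫ x in a..t, E2rhs D v μ u i x := by
        rw [← Finset.sum_add_distrib]
        exact Finset.sum_congr rfl fun i _ => hid i t ⟨ha0, le_rfl⟩
      have hzero : ∑ i : Fin S, ∫ x in a..t, E2rhs D v μ u i x = 0 := by
        rw [← intervalIntegral.integral_finset_sum (fun i _ => hint i)]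
        have hptzero : ∀ x, (∑ i : Fin S, E2rhs D v μ u i x) = 0 := by
          intro x
          simp only [E2rhs]
          rw [Finset.sum_comm]
          refine Finset.sum_eq_zero fun j _ => ?_
          rw [← Finset.mul_sum, H.Q_rowsum, mul_zero]
        calc (∫ x in a..t, ∑ i : Fin S, E2rhs D v μ u i x)
            = ∫ x in a..t, (0:ℝ) := intervalIntegral.integral_congr fun x _ => hptzero x
          _ = 0 := intervalIntegral.integral_zero
      rw [hsumid, hstartmem.2, hzero]
      ring
    exact ⟨hpos, hmass⟩



lemma pi_norm_le_sum_abs {S : ℕ} (x : Fin S → ℝ) : ‖x‖ ≤ ∑ i, |x i| := by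
  refine (pi_norm_le_iff_of_nonneg (Finset.sum_nonneg fun i (_ : i ∈ Finset.univ) =>
    abs_nonneg (x i))).mpr ?_
  intro i
  rw [Real.norm_eq_abs]
  exact Finset.single_le_sum (fun j _ => abs_nonneg (x j)) (Finset.mem_univ i)

/-- The ℓ¹ difference estimate for the forward equation. -/
lemma forward_diff {S n : ℕ} {T : ℝ} {D : Model S n}
    {Lpsi LQ LPsi Llam Psimax psimax Qmax lammax : ℝ} {Jmax : ℕ}
    (H : Hyps S n T D Lpsi LQ LPsi Llam Psimax psimax Qmax lammax Jmax)
    (v v' : ℝ → (Fin n → ℝ) → Fin S → ℝ)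
    (hv : MemV S n T (vmaxC n T Psimax psimax Qmax lammax) v)
    (hv' : MemV S n T (vmaxC n T Psimax psimax Qmax lammax) v')
    (μ μ' : ℝ → (Fin n → ℝ) → Fin S → ℝ)
    (hμ : SolForward S n T D v μ) (hμ' : SolForward S n T D v' μ') :
    ∀ t u, memTS n T t u →
      (∑ i, |μ t u i - μ' t u i|) ≤
        LQ * supTS S n T (fun t u => v t u - v' t u)
          * (t * Real.exp ((Qmax + LQ) * t)) := by
  classical
  have hT := H.hT
  have hsimp1 := forward_simplex H v μ hμ
  have hsimp2 := forward_simplex H v' μ' hμ'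
  set Δ : ℝ := supTS S n T (fun t u => v t u - v' t u) with hΔdef
  -- the sup is a true upper bound
  have hbdd : BddAbove {r : ℝ | ∃ t u, memTS n T t u ∧
      r = ‖(fun t u => v t u - v' t u) t u‖} := by
    refine ⟨2 * vmaxC n T Psimax psimax Qmax lammax, ?_⟩
    rintro r ⟨t, u, htu, rfl⟩
    simp only
    calc ‖v t u - v' t u‖ ≤ ‖v t u‖ + ‖v' t u‖ := norm_sub_le _ _
      _ ≤ _ := by linarith [hv.2 t u htu, hv'.2 t u htu]
  have hΔle : ∀ t u, memTS n T t u → ‖v t u - v' t u‖ ≤ Δ := fun t u htu =>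
    le_csSup hbdd ⟨t, u, htu, rfl⟩
  have hΔ0 : 0 ≤ Δ :=
    (norm_nonneg _).trans (hΔle 0 (fun _ => (-1:ℝ)) (memTS_zero n T hT))
  -- `Qmax` is nonnegative
  have hQmax0 : 0 ≤ Qmax := by
    have hi : Fin S := ⟨0, H.hS⟩
    have := H.Q_bdd 0 (fun _ => (-1:ℝ)) D.m0 (fun _ => 0) (memTS_zero n T hT) H.hm0 hi
    have h0 : (0:ℝ) ≤ ∑ j, |D.Q 0 (fun _ => (-1:ℝ)) D.m0 (fun _ => 0) hi j| :=
      Finset.sum_nonneg fun j _ => abs_nonneg _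
    linarith
  set A : ℝ := Qmax + LQ with hAdef
  have hA0 : 0 ≤ A := by have := H.hLQ; simp only [hAdef]; linarith
  have hB0 : 0 ≤ LQ * Δ := mul_nonneg H.hLQ.le hΔ0
  obtain ⟨hE4, hE5, hE2⟩ := hμ
  obtain ⟨hE4', hE5', hE2'⟩ := hμ'
  suffices hmain : ∀ m : ℕ, ∀ u : Fin n → ℝ, memU n T u → Zu u = m →
      ∀ t, memTS n T t u →
        (∑ i, |μ t u i - μ' t u i|) ≤ LQ * Δ * (t * Real.exp (A * t)) by
    intro t u htu
    exact hmain (Zu u) u htu.1 rfl t htu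
  intro m
  induction m using Nat.strong_induction_on with
  | _ m ih =>
    intro u hu hZu t ht
    set a : ℝ := startTime u with hadef
    have haIcc : a ∈ Set.Icc (0:ℝ) T := startTime_mem_Icc hT hu
    have ha0 : a ≤ t := startTime_le_of_memTS hT ht
    have haTS : memTS n T a u := memTS_of_icc hT hu le_rfl haIcc.2
    -- bound on the starting value
    have hstart : (∑ i, |μ a u i - μ' a u i|) ≤ LQ * Δ * (a * Real.exp (A * a)) := by
      rcases Nat.eq_zero_or_pos m with hm0 | hmpos
      · have hZ0 : Zu u = 0 := by omega
        have hueq : u = fun _ => (-1:ℝ) := u_eq_neg_one_of_Zu_zero hT hu hZ0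
        have hst0 : a = 0 := by rw [hadef, startTime, if_pos hZ0]
        have hz : ∀ i, μ a u i - μ' a u i = 0 := by
          intro i
          rw [hst0, hueq, hE4 i, hE4' i, sub_self]
        calc (∑ i, |μ a u i - μ' a u i|) = 0 := by
              refine Finset.sum_eq_zero fun i _ => ?_
              rw [hz i, abs_zero]
          _ ≤ LQ * Δ * (a * Real.exp (A * a)) := by
              have h1 : 0 ≤ a * Real.exp (A * a) :=
                mul_nonneg haIcc.1 (Real.exp_pos _).le
              positivity
      · have hZ1 : 1 ≤ Zu u := by omega
        have hZp := Zu_pop hT hu hZ1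
        have hal : a = lastTime u := startTime_eq_lastTime hZ1
        have hIH := ih (m - 1) (by omega) (pop u) (memU_pop hT hu hZ1)
          (by rw [hZp, hZu]) (lastTime u) (memTS_lastTime_pop hT hu hZ1)
        have htrans : (∑ j, |μ (lastTime u) u j - μ' (lastTime u) u j|)
            ≤ ∑ i, |μ (lastTime u) (pop u) i - μ' (lastTime u) (pop u) i| := by
          have h5 := hE5 u hu hZ1
          have h5' := hE5' u hu hZ1
          calc (∑ j, |μ (lastTime u) u j - μ' (lastTime u) u j|)
              = ∑ j, |∑ i, if D.J (lastTime u) i = j then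
                  (μ (lastTime u) (pop u) i - μ' (lastTime u) (pop u) i) else 0| := by
                refine Finset.sum_congr rfl fun j _ => ?_
                rw [h5 j, h5' j, ← Finset.sum_sub_distrib]
                congr 1
                refine Finset.sum_congr rfl fun i _ => ?_
                by_cases hc : D.J (lastTime u) i = j
                · rw [if_pos hc, if_pos hc, if_pos hc]
                · rw [if_neg hc, if_neg hc, if_neg hc, sub_zero]
            _ ≤ ∑ j, ∑ i, |if D.J (lastTime u) i = j then
                  (μ (lastTime u) (pop u) i - μ' (lastTime u) (pop u) i) else 0| :=
                Finset.sum_le_sum fun j _ => Finset.abs_sum_le_sum_abs _ _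
            _ = ∑ i, ∑ j, |if D.J (lastTime u) i = j then
                  (μ (lastTime u) (pop u) i - μ' (lastTime u) (pop u) i) else 0| :=
                Finset.sum_comm
            _ = ∑ i, |μ (lastTime u) (pop u) i - μ' (lastTime u) (pop u) i| := by
                refine Finset.sum_congr rfl fun i _ => ?_
                have : ∀ j, |if D.J (lastTime u) i = j then
                    (μ (lastTime u) (pop u) i - μ' (lastTime u) (pop u) i) else 0|
                    = if D.J (lastTime u) i = j then
                    |μ (lastTime u) (pop u) i - μ' (lastTime u) (pop u) i| else 0 := by
                  intro j
                  by_cases hc : D.J (lastTime u) i = j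
                  · rw [if_pos hc, if_pos hc]
                  · rw [if_neg hc, if_neg hc, abs_zero]
                rw [Finset.sum_congr rfl fun j _ => this j, Finset.sum_ite_eq]
                simp
        rw [hal]
        exact htrans.trans hIH
    -- the interval estimate via Grönwall
    have hsmem : ∀ s ∈ Set.Icc a t, memTS n T s u := fun s hs =>
      memTS_of_icc hT hu hs.1 (hs.2.trans ht.2.1.2)
    set ρ : Fin S → ℝ → ℝ := fun i s => E2rhs D v μ u i s with hρdef
    set ρ' : Fin S → ℝ → ℝ := fun i s => E2rhs D v' μ' u i s with hρ'def
    have hri : ∀ i : Fin S, IntervalIntegrable (fun x => ρ i x - ρ' i x) volume a t :=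
      fun i => ((hE2 u hu t ht i).1).sub ((hE2' u hu t ht i).1)
    set r : ℝ → ℝ := fun x => ∑ i, |ρ i x - ρ' i x| with hrdef
    have hrint : IntervalIntegrable r volume a t := by
      rw [intervalIntegrable_iff]
      exact integrable_finset_sum _ fun i _ =>
        (intervalIntegrable_iff.mp (hri i).abs)
    have hrsub : ∀ s ∈ Set.Icc a t, IntervalIntegrable r volume a s := fun s hs =>
      hrint.mono_set (by
        rw [Set.uIcc_of_le hs.1, Set.uIcc_of_le ha0]
        exact Set.Icc_subset_Icc le_rfl hs.2)
    have hrpos : ∀ s, 0 ≤ r s := fun s => Finset.sum_nonneg fun i _ => abs_nonneg _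
    -- pathwise bound by the primitive
    have hkey : ∀ s ∈ Set.Icc a t,
        (∑ i, |μ s u i - μ' s u i|) ≤ (∑ i, |μ a u i - μ' a u i|) + ∫ x in a..s, r x := by
      intro s hs
      have hco : ∀ i : Fin S, |μ s u i - μ' s u i|
          ≤ |μ a u i - μ' a u i| + ∫ x in a..s, |ρ i x - ρ' i x| := by
        intro i
        have h1 := (hE2 u hu s (hsmem s hs) i).2
        have h2 := (hE2' u hu s (hsmem s hs) i).2
        have hii : IntervalIntegrable (fun x => ρ i x - ρ' i x) volume a s :=
          (hri i).mono_set (by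
            rw [Set.uIcc_of_le hs.1, Set.uIcc_of_le ha0]
            exact Set.Icc_subset_Icc le_rfl hs.2)
        have hiii1 : IntervalIntegrable (ρ i) volume a s :=
          ((hE2 u hu s (hsmem s hs) i).1)
        have hiii2 : IntervalIntegrable (ρ' i) volume a s :=
          ((hE2' u hu s (hsmem s hs) i).1)
        have hdiff : μ s u i - μ' s u i
            = (μ a u i - μ' a u i) + ∫ x in a..s, (ρ i x - ρ' i x) := by
          rw [intervalIntegral.integral_sub hiii1 hiii2, h1, h2]
          ring
        calc |μ s u i - μ' s u i|
            ≤ |μ a u i - μ' a u i| + |∫ x in a..s, (ρ i x - ρ' i x)| := by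
              rw [hdiff]; exact abs_add_le _ _
          _ ≤ |μ a u i - μ' a u i| + ∫ x in a..s, |ρ i x - ρ' i x| :=
              add_le_add_right (intervalIntegral.abs_integral_le_integral_abs hs.1) _
      calc (∑ i, |μ s u i - μ' s u i|)
          ≤ ∑ i, (|μ a u i - μ' a u i| + ∫ x in a..s, |ρ i x - ρ' i x|) :=
            Finset.sum_le_sum fun i _ => hco i
        _ = (∑ i, |μ a u i - μ' a u i|) + ∑ i : Fin S, ∫ x in a..s, |ρ i x - ρ' i x| :=
            Finset.sum_add_distrib
        _ = (∑ i, |μ a u i - μ' a u i|) + ∫ x in a..s, r x := by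
            rw [← intervalIntegral.integral_finset_sum (fun i _ => (((hri i).mono_set (by
              rw [Set.uIcc_of_le hs.1, Set.uIcc_of_le ha0]
              exact Set.Icc_subset_Icc le_rfl hs.2)).abs))]
    -- the pointwise bound on `r`
    have hr_bound : ∀ s ∈ Set.Icc a t,
        r s ≤ A * (∑ j, |μ s u j - μ' s u j|) + LQ * Δ := by
      intro s hs
      have hsTS := hsmem s hs
      have hm1 : μ s u ∈ simplex S := hsimp1 s u hsTS
      have hm2 : μ' s u ∈ simplex S := hsimp2 s u hsTS
      have hg0 : 0 ≤ ∑ j, |μ s u j - μ' s u j| :=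
        Finset.sum_nonneg fun j _ => abs_nonneg _
      have hnorm : ‖μ s u - μ' s u‖ ≤ ∑ j, |μ s u j - μ' s u j| := by
        refine (pi_norm_le_sum_abs _).trans_eq ?_
        exact Finset.sum_congr rfl fun j _ => by rw [Pi.sub_apply]
      have hvb : ‖v s u - v' s u‖ ≤ Δ := hΔle s u hsTS
      have hterm : ∀ i : Fin S, |ρ i s - ρ' i s|
          ≤ (∑ j, |μ s u j - μ' s u j| * |D.Q s u (μ s u) (v s u) j i|)
            + ∑ j, μ' s u j * |D.Q s u (μ s u) (v s u) j i - D.Q s u (μ' s u) (v' s u) j i| := by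
        intro i
        have hsplit : ρ i s - ρ' i s
            = ∑ j, ((μ s u j - μ' s u j) * D.Q s u (μ s u) (v s u) j i
              + μ' s u j * (D.Q s u (μ s u) (v s u) j i - D.Q s u (μ' s u) (v' s u) j i)) := by
          simp only [hρdef, hρ'def, E2rhs]
          rw [← Finset.sum_sub_distrib]
          exact Finset.sum_congr rfl fun j _ => by ring
        rw [hsplit]
        refine (Finset.abs_sum_le_sum_abs _ _).trans ?_
        refine (Finset.sum_le_sum fun j (_ : j ∈ Finset.univ) => ?_).trans_eq
          Finset.sum_add_distrib
        refine (abs_add_le _ _).trans (le_of_eq ?_)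
        rw [abs_mul, abs_mul, abs_of_nonneg (hm2.1 j)]
      have h1 : (∑ i : Fin S, ∑ j, |μ s u j - μ' s u j| * |D.Q s u (μ s u) (v s u) j i|)
          ≤ Qmax * ∑ j, |μ s u j - μ' s u j| := by
        rw [Finset.sum_comm]
        calc (∑ j, ∑ i, |μ s u j - μ' s u j| * |D.Q s u (μ s u) (v s u) j i|)
            = ∑ j, |μ s u j - μ' s u j| * ∑ i, |D.Q s u (μ s u) (v s u) j i| := by
              exact Finset.sum_congr rfl fun j _ => (Finset.mul_sum _ _ _).symm
          _ ≤ ∑ j, |μ s u j - μ' s u j| * Qmax :=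
              Finset.sum_le_sum fun j _ => mul_le_mul_of_nonneg_left
                (H.Q_bdd s u (μ s u) (v s u) hsTS hm1 j) (abs_nonneg _)
          _ = Qmax * ∑ j, |μ s u j - μ' s u j| := by
              rw [← Finset.sum_mul]; ring
      have h2 : (∑ i : Fin S, ∑ j, μ' s u j *
            |D.Q s u (μ s u) (v s u) j i - D.Q s u (μ' s u) (v' s u) j i|)
          ≤ LQ * ((∑ j, |μ s u j - μ' s u j|) + Δ) := by
        rw [Finset.sum_comm]
        have hrow : ∀ j, (∑ i, |D.Q s u (μ s u) (v s u) j i - D.Q s u (μ' s u) (v' s u) j i|)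
            ≤ LQ * ((∑ j, |μ s u j - μ' s u j|) + Δ) := by
          intro j
          refine (H.Q_lip s u hsTS (μ s u) hm1 (μ' s u) hm2 (v s u) (v' s u) j).trans ?_
          exact mul_le_mul_of_nonneg_left (add_le_add hnorm hvb) H.hLQ.le
        calc (∑ j, ∑ i, μ' s u j *
              |D.Q s u (μ s u) (v s u) j i - D.Q s u (μ' s u) (v' s u) j i|)
            = ∑ j, μ' s u j * ∑ i,
              |D.Q s u (μ s u) (v s u) j i - D.Q s u (μ' s u) (v' s u) j i| :=
              Finset.sum_congr rfl fun j _ => (Finset.mul_sum _ _ _).symm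
          _ ≤ ∑ j, μ' s u j * (LQ * ((∑ j, |μ s u j - μ' s u j|) + Δ)) :=
              Finset.sum_le_sum fun j _ => mul_le_mul_of_nonneg_left (hrow j) (hm2.1 j)
          _ = (∑ j, μ' s u j) * (LQ * ((∑ j, |μ s u j - μ' s u j|) + Δ)) :=
              (Finset.sum_mul _ _ _).symm
          _ = LQ * ((∑ j, |μ s u j - μ' s u j|) + Δ) := by rw [hm2.2, one_mul]
      have hsum : r s ≤ Qmax * (∑ j, |μ s u j - μ' s u j|)
          + LQ * ((∑ j, |μ s u j - μ' s u j|) + Δ) := by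
        calc r s ≤ ∑ i : Fin S,
              ((∑ j, |μ s u j - μ' s u j| * |D.Q s u (μ s u) (v s u) j i|)
              + ∑ j, μ' s u j *
                |D.Q s u (μ s u) (v s u) j i - D.Q s u (μ' s u) (v' s u) j i|) :=
            Finset.sum_le_sum fun i _ => hterm i
          _ = (∑ i : Fin S, ∑ j, |μ s u j - μ' s u j| * |D.Q s u (μ s u) (v s u) j i|)
              + ∑ i : Fin S, ∑ j, μ' s u j *
                |D.Q s u (μ s u) (v s u) j i - D.Q s u (μ' s u) (v' s u) j i| :=
            Finset.sum_add_distrib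
          _ ≤ _ := add_le_add h1 h2
      simp only [hAdef]
      linarith
    -- Grönwall
    set c₀ : ℝ := ∑ i, |μ a u i - μ' a u i| with hc₀def
    have hc₀0 : 0 ≤ c₀ := Finset.sum_nonneg fun i _ => abs_nonneg _
    have hgron := gronwall (a := a) (b := t) (A := A) (B := LQ * Δ) (c₀ := c₀)
      ha0 hA0 hB0 hc₀0 hrint (fun s _ => hrpos s) ?_
    · -- conclude
      have hfin : (∑ i, |μ t u i - μ' t u i|) ≤ (c₀ + LQ * Δ * (t - a)) * Real.exp (A * (t - a)) :=
        (hkey t ⟨ha0, le_rfl⟩).trans hgron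
      have hexp1 : (1:ℝ) ≤ Real.exp (A * a) :=
        Real.one_le_exp (mul_nonneg hA0 haIcc.1)
      have hexp2 : (0:ℝ) < Real.exp (A * (t - a)) := Real.exp_pos _
      have hstep : (c₀ + LQ * Δ * (t - a)) ≤ LQ * Δ * t * Real.exp (A * a) := by
        have h1 : LQ * Δ * (t - a) ≤ LQ * Δ * (t - a) * Real.exp (A * a) := by
          nlinarith [mul_nonneg hB0 (by linarith : (0:ℝ) ≤ t - a)]
        have h2 : c₀ ≤ LQ * Δ * (a * Real.exp (A * a)) := hstart
        nlinarith []
      have hmul : (c₀ + LQ * Δ * (t - a)) * Real.exp (A * (t - a))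
          ≤ LQ * Δ * t * (Real.exp (A * a) * Real.exp (A * (t - a))) := by
        have h0 : 0 ≤ c₀ + LQ * Δ * (t - a) := by
          have : 0 ≤ LQ * Δ * (t - a) := mul_nonneg hB0 (by linarith)
          linarith
        nlinarith [mul_le_mul_of_nonneg_right hstep hexp2.le]
      have hexpeq : Real.exp (A * a) * Real.exp (A * (t - a)) = Real.exp (A * t) := by
        rw [← Real.exp_add]
        congr 1
        ring
      rw [hexpeq] at hmul
      calc (∑ i, |μ t u i - μ' t u i|)
          ≤ (c₀ + LQ * Δ * (t - a)) * Real.exp (A * (t - a)) := hfin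
        _ ≤ LQ * Δ * t * Real.exp (A * t) := hmul
        _ = LQ * Δ * (t * Real.exp (A * t)) := by ring
    · -- the Grönwall hypothesis
      intro s hs
      have h1 := hr_bound s hs
      have h2 := hkey s hs
      have h3 : A * (∑ j, |μ s u j - μ' s u j|) ≤ A * (c₀ + ∫ x in a..s, r x) :=
        mul_le_mul_of_nonneg_left h2 hA0
      linarith


end MFGShocks

namespace MFGShocks

/-- **Refined forward Lipschitz estimate depending on the number of shocks**
(inside Lemma B.5). If `v, v̄ ∈ V` and `μ, μ̄` are the unique solutions of (E2), (E4),
(E5) given `v` and `v̄` respectively, then for every `(t,u) ∈ TS`,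
`‖μ(t,u) − μ̄(t,u)‖ ≤ L_Q̂ T (Σ_{i=0}^{Z(u)} (e^{(Qmax+L_Q̂)T})^{i+1} Jmax^i)
  sup_{TS} ‖v − v̄‖`. -/
theorem forward_lipschitz_refined (S n : ℕ) (T : ℝ) (D : Model S n)
    (Lpsi LQ LPsi Llam Psimax psimax Qmax lammax : ℝ) (Jmax : ℕ)
    (H : Hyps S n T D Lpsi LQ LPsi Llam Psimax psimax Qmax lammax Jmax)
    (v v' : ℝ → (Fin n → ℝ) → Fin S → ℝ)
    (hv : MemV S n T (vmaxC n T Psimax psimax Qmax lammax) v)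
    (hv' : MemV S n T (vmaxC n T Psimax psimax Qmax lammax) v')
    (μ μ' : ℝ → (Fin n → ℝ) → Fin S → ℝ)
    (hμreg : Regular S n T μ) (hμ : SolForward S n T D v μ)
    (hμ'reg : Regular S n T μ') (hμ' : SolForward S n T D v' μ') :
    ∀ t u, memTS n T t u →
      ‖μ t u - μ' t u‖ ≤
        LQ * T * (∑ i ∈ Finset.range (Zu u + 1),
            (Real.exp ((Qmax + LQ) * T)) ^ (i + 1) * (Jmax : ℝ) ^ i) *
          supTS S n T (fun t u => v t u - v' t u) := by
  intro t u ht
  have hT := H.hT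
  have hdiff := forward_diff H v v' hv hv' μ μ' hμ hμ' t u ht
  have hQmax0 : 0 ≤ Qmax := by
    have hi : Fin S := ⟨0, H.hS⟩
    have hb := H.Q_bdd 0 (fun _ => (-1:ℝ)) D.m0 (fun _ => 0) (memTS_zero n T hT) H.hm0 hi
    have h0 : (0:ℝ) ≤ ∑ j, |D.Q 0 (fun _ => (-1:ℝ)) D.m0 (fun _ => 0) hi j| :=
      Finset.sum_nonneg fun j _ => abs_nonneg _
    linarith
  have hA0 : 0 ≤ Qmax + LQ := by linarith [H.hLQ]
  have hbdd : BddAbove {r : ℝ | ∃ t u, memTS n T t u ∧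
      r = ‖(fun t u => v t u - v' t u) t u‖} := by
    refine ⟨2 * vmaxC n T Psimax psimax Qmax lammax, ?_⟩
    rintro r ⟨t', u', htu, rfl⟩
    simp only
    calc ‖v t' u' - v' t' u'‖ ≤ ‖v t' u'‖ + ‖v' t' u'‖ := norm_sub_le _ _
      _ ≤ _ := by linarith [hv.2 t' u' htu, hv'.2 t' u' htu]
  have hΔ0 : 0 ≤ supTS S n T (fun t u => v t u - v' t u) :=
    (norm_nonneg _).trans (le_csSup hbdd ⟨0, fun _ => (-1:ℝ), memTS_zero n T hT, rfl⟩)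
  set Δ : ℝ := supTS S n T (fun t u => v t u - v' t u) with hΔdef
  have hnorm : ‖μ t u - μ' t u‖ ≤ ∑ i, |μ t u i - μ' t u i| :=
    (pi_norm_le_sum_abs _).trans_eq (Finset.sum_congr rfl fun i _ => by rw [Pi.sub_apply])
  have ht0 : 0 ≤ t := ht.2.1.1
  have htT : t ≤ T := ht.2.1.2
  have hmono : t * Real.exp ((Qmax + LQ) * t) ≤ T * Real.exp ((Qmax + LQ) * T) :=
    mul_le_mul htT (Real.exp_le_exp.mpr (mul_le_mul_of_nonneg_left htT hA0))
      (Real.exp_pos _).le (ht0.trans htT)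
  have hLΔ : 0 ≤ LQ * Δ := mul_nonneg H.hLQ.le hΔ0
  have hchain : ‖μ t u - μ' t u‖ ≤ LQ * Δ * (T * Real.exp ((Qmax + LQ) * T)) :=
    hnorm.trans (hdiff.trans (mul_le_mul_of_nonneg_left hmono hLΔ))
  have hsum_ge : Real.exp ((Qmax + LQ) * T) ≤ ∑ i ∈ Finset.range (Zu u + 1),
      (Real.exp ((Qmax + LQ) * T)) ^ (i + 1) * (Jmax : ℝ) ^ i := by
    have h0 : (Real.exp ((Qmax + LQ) * T)) ^ (0 + 1) * (Jmax : ℝ) ^ 0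
        = Real.exp ((Qmax + LQ) * T) := by simp
    calc Real.exp ((Qmax + LQ) * T)
        = (Real.exp ((Qmax + LQ) * T)) ^ (0 + 1) * (Jmax : ℝ) ^ 0 := h0.symm
      _ ≤ _ := Finset.single_le_sum
          (f := fun i => (Real.exp ((Qmax + LQ) * T)) ^ (i + 1) * (Jmax : ℝ) ^ i)
          (fun i _ => mul_nonneg (pow_nonneg (Real.exp_pos _).le _)
            (pow_nonneg (Nat.cast_nonneg _) _))
          (Finset.mem_range.mpr (Nat.succ_pos _))
  have hfac : 0 ≤ LQ * T * Δ := mul_nonneg (mul_nonneg H.hLQ.le hT.le) hΔ0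
  refine hchain.trans ?_
  have hkey := mul_nonneg hfac (sub_nonneg.mpr hsum_ge)
  nlinarith [hkey]

end MFGShocks
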